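/- Under the assumptions of the time-correlated noise model v_k = D_{k-1} v_{k-1} + u_{k-1} with invertible D_k, the covariance function Σ_{k,s}^v = Cov[v_k, v_s] for s ≤ k factorizes in separable form as Σ_{k,s}^v = 𝐃_k 𝐅_s^T, where 𝐃_k = D_{k-1} ⋯ D_0 and 𝐅_s^T = (D_{s-1} ⋯ D_0)^{-1} Σ_s^v. -/

import Mathlib

open MeasureTheory Matrix

/-- Expectation of a random vector, componentwise. -/
noncomputable def Evec {Ω : Type*} [MeasurableSpace Ω] (μ : Measure Ω) {ι : Type*}
    (f : Ω → ι → ℝ) : ι → ℝ := fun i => ∫ ω, f ω i ∂μ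

/-- Covariance matrix `Cov[f, g] = E[(f - E f)(g - E g)ᵀ]`. -/
noncomputable def Cov {Ω : Type*} [MeasurableSpace Ω] (μ : Measure Ω) {ι κ : Type*}
    (f : Ω → ι → ℝ) (g : Ω → κ → ℝ) : Matrix ι κ ℝ :=
  Matrix.of fun i j => ∫ ω, (f ω i - Evec μ f i) * (g ω j - Evec μ g j) ∂μ

/-- Ordered product `D_{k-1} ⋯ D_s` (equal to `1` when `k ≤ s`). -/
noncomputable def Dprod {n : ℕ} (D : ℕ → Matrix (Fin n) (Fin n) ℝ) (s : ℕ) :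
    ℕ → Matrix (Fin n) (Fin n) ℝ
  | 0 => 1
  | k + 1 => if k + 1 ≤ s then 1 else D k * Dprod D s k

section Helpers

set_option linter.unusedSectionVars false

variable {Ω : Type*} [MeasurableSpace Ω] {μ : Measure Ω} [IsProbabilityMeasure μ] {n : ℕ}

lemma memL2_comp {f : Ω → Fin n → ℝ} (hf : MemLp f 2 μ) (i : Fin n) :
    MemLp (fun ω => f ω i) 2 μ := by
  have := (ContinuousLinearMap.proj (R := ℝ) (φ := fun _ : Fin n => ℝ) i).comp_memLp' hf
  exact this

lemma centered_L2 {f : Ω → Fin n → ℝ} (hf : MemLp f 2 μ) (i : Fin n) :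
    MemLp (fun ω => f ω i - Evec μ f i) 2 μ :=
  (memL2_comp hf i).sub (memLp_const _)

lemma integrable_centered_mul {f g : Ω → Fin n → ℝ} (hf : MemLp f 2 μ) (hg : MemLp g 2 μ)
    (i : Fin n) (j : Fin n) :
    Integrable (fun ω => (f ω i - Evec μ f i) * (g ω j - Evec μ g j)) μ := by
  have h := ((centered_L2 hg j).smul (centered_L2 hf i)
    (p := 2) (q := 2) (r := 1)).integrable le_rfl
  exact h

lemma integral_centered {f : Ω → Fin n → ℝ} (hf : MemLp f 2 μ) (i : Fin n) :
    ∫ ω, (f ω i - Evec μ f i) ∂μ = 0 := by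
  rw [integral_sub ((memL2_comp hf i).integrable one_le_two) (integrable_const _)]
  simp [Evec]

lemma Cov_comm {f : Ω → Fin n → ℝ} {g : Ω → Fin n → ℝ} :
    Cov μ f g = (Cov μ g f)ᵀ := by
  ext i j; simp [Cov, mul_comm]

lemma Cov_add_left (A : Matrix (Fin n) (Fin n) ℝ) {f g h : Ω → Fin n → ℝ}
    (hf : MemLp f 2 μ) (hg : MemLp g 2 μ) (hh : MemLp h 2 μ) :
    Cov μ (fun ω => A.mulVec (f ω) + g ω) h = A * Cov μ f h + Cov μ g h := by
  have hEf : ∀ l, Integrable (fun ω => f ω l) μ :=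
    fun l => (memL2_comp hf l).integrable one_le_two
  have hEg : ∀ l, Integrable (fun ω => g ω l) μ :=
    fun l => (memL2_comp hg l).integrable one_le_two
  have hE : ∀ i, Evec μ (fun ω => A.mulVec (f ω) + g ω) i
      = (∑ l, A i l * Evec μ f l) + Evec μ g i := by
    intro i
    simp only [Evec, Pi.add_apply, Matrix.mulVec, dotProduct]
    rw [integral_add (integrable_finset_sum _ fun l _ => (hEf l).const_mul _) (hEg i),
      integral_finset_sum _ fun l _ => (hEf l).const_mul _]
    simp [integral_const_mul]
  ext i j
  have key : ∀ ω, ((A.mulVec (f ω) + g ω) i - Evec μ (fun ω => A.mulVec (f ω) + g ω) i)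
        * (h ω j - Evec μ h j)
      = (∑ l, A i l * ((f ω l - Evec μ f l) * (h ω j - Evec μ h j)))
        + (g ω i - Evec μ g i) * (h ω j - Evec μ h j) := by
    intro ω
    rw [hE]
    simp only [Pi.add_apply, Matrix.mulVec, dotProduct, ← mul_assoc]
    rw [← Finset.sum_mul]
    have h1 : ∑ l, A i l * (f ω l - Evec μ f l)
        = (∑ l, A i l * f ω l) - ∑ l, A i l * Evec μ f l := by
      rw [← Finset.sum_sub_distrib]
      exact Finset.sum_congr rfl fun l _ => mul_sub _ _ _
    rw [h1]; ring
  have hint : ∀ l, Integrable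
      (fun ω => A i l * ((f ω l - Evec μ f l) * (h ω j - Evec μ h j))) μ :=
    fun l => (integrable_centered_mul hf hh l j).const_mul _
  simp only [Cov, Matrix.of_apply, Matrix.add_apply, Matrix.mul_apply]
  calc ∫ ω, ((fun ω => A.mulVec (f ω) + g ω) ω i
          - Evec μ (fun ω => A.mulVec (f ω) + g ω) i) * (h ω j - Evec μ h j) ∂μ
      = ∫ ω, ((∑ l, A i l * ((f ω l - Evec μ f l) * (h ω j - Evec μ h j)))
          + (g ω i - Evec μ g i) * (h ω j - Evec μ h j)) ∂μ := by
        exact integral_congr_ae (Filter.Eventually.of_forall fun ω => key ω)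
    _ = (∑ l, A i l * ∫ ω, (f ω l - Evec μ f l) * (h ω j - Evec μ h j) ∂μ)
          + ∫ ω, (g ω i - Evec μ g i) * (h ω j - Evec μ h j) ∂μ := by
        rw [integral_add (integrable_finset_sum _ fun l _ => hint l)
          (integrable_centered_mul hg hh i j),
          integral_finset_sum _ fun l _ => hint l]
        simp [integral_const_mul]

lemma Cov_add_right (A : Matrix (Fin n) (Fin n) ℝ) {f g h : Ω → Fin n → ℝ}
    (hf : MemLp f 2 μ) (hg : MemLp g 2 μ) (hh : MemLp h 2 μ) :
    Cov μ h (fun ω => A.mulVec (f ω) + g ω) = Cov μ h f * Aᵀ + Cov μ h g := by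
  rw [Cov_comm (f := h), Cov_add_left A hf hg hh, Matrix.transpose_add, Matrix.transpose_mul,
    ← Cov_comm, ← Cov_comm]

lemma Dprod_of_le {D : ℕ → Matrix (Fin n) (Fin n) ℝ} {s k : ℕ} (h : k ≤ s) :
    Dprod D s k = 1 := by
  cases k with
  | zero => rfl
  | succ m => simp [Dprod, h]

lemma Dprod_succ {D : ℕ → Matrix (Fin n) (Fin n) ℝ} {s k : ℕ} (h : s ≤ k) :
    Dprod D s (k + 1) = D k * Dprod D s k := by
  rw [Dprod, if_neg (by omega)]

lemma Dprod_split {D : ℕ → Matrix (Fin n) (Fin n) ℝ} {s k : ℕ} (h : s ≤ k) :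
    Dprod D 0 k = Dprod D s k * Dprod D 0 s := by
  induction k with
  | zero =>
    have : s = 0 := Nat.le_zero.mp h
    subst this; simp [Dprod]
  | succ k ih =>
    rcases Nat.lt_or_ge k s with hlt | hge
    · have hs : s = k + 1 := by omega
      subst hs
      rw [Dprod_of_le le_rfl, one_mul]
    · rw [Dprod_succ (Nat.zero_le _), ih hge, Dprod_succ hge, Matrix.mul_assoc]

lemma Dprod_isUnit {D : ℕ → Matrix (Fin n) (Fin n) ℝ} (hD : ∀ k, IsUnit (D k)) (s : ℕ) :
    IsUnit (Dprod D 0 s) := by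
  induction s with
  | zero => exact isUnit_one
  | succ k ih => rw [Dprod_succ (Nat.zero_le _)]; exact (hD k).mul ih

end Helpers

/-- For the time-correlated noise `v_k = D_{k-1} v_{k-1} + u_{k-1}` with invertible `D_k`,
the covariance function factorizes in separable form:
`Σ_{k,s}^v = 𝐃_k 𝐅_sᵀ` for `s ≤ k`, with `𝐃_k = D_{k-1}⋯D_0` and
`𝐅_sᵀ = (D_{s-1}⋯D_0)⁻¹ Σ_s^v`. -/
theorem time_correlated_noise_separable {Ω : Type*} [MeasurableSpace Ω] (μ : Measure Ω)
    [IsProbabilityMeasure μ] (n : ℕ) (D : ℕ → Matrix (Fin n) (Fin n) ℝ)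
    (hD : ∀ k, IsUnit (D k))
    (v u : ℕ → Ω → Fin n → ℝ)
    (hvmeas : ∀ k, Measurable (v k)) (humeas : ∀ k, Measurable (u k))
    (hvL2 : ∀ k, MemLp (v k) 2 μ) (huL2 : ∀ k, MemLp (u k) 2 μ)
    (hrec : ∀ k, 1 ≤ k → ∀ ω, v k ω = (D (k - 1)).mulVec (v (k - 1) ω) + u (k - 1) ω)
    (hv0mean : Evec μ (v 0) = 0)
    (humean : ∀ k, Evec μ (u k) = 0)
    (hwhite : ∀ k s, k ≠ s → Cov μ (u k) (u s) = 0)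
    (hindep : ProbabilityTheory.IndepFun (v 0) (fun ω k => u k ω) μ) :
    ∀ k s, s ≤ k →
      Cov μ (v k) (v s) = Dprod D 0 k * ((Dprod D 0 s)⁻¹ * Cov μ (v s) (v s)) := by
  -- useful rewriting of the recursion as a function equality
  have hvfun : ∀ k : ℕ, v (k + 1) = fun ω => (D k).mulVec (v k ω) + u k ω := by
    intro k
    funext ω
    have := hrec (k + 1) (Nat.le_add_left 1 k) ω
    simpa using this
  -- covariance of u k with v 0 vanishes by independence
  have hcov0 : ∀ k, Cov μ (u k) (v 0) = 0 := by
    intro k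
    ext i j
    have hXY : ProbabilityTheory.IndepFun (fun ω => u k ω i) (fun ω => v 0 ω j) μ := by
      have h1 : Measurable (fun p : ℕ → Fin n → ℝ => p k i) :=
        (measurable_pi_apply i).comp (measurable_pi_apply k)
      have h2 : Measurable (fun p : Fin n → ℝ => p j) := measurable_pi_apply j
      exact hindep.symm.comp h1 h2
    have hXY' : ProbabilityTheory.IndepFun
        (fun ω => u k ω i - Evec μ (u k) i) (fun ω => v 0 ω j - Evec μ (v 0) j) μ :=
      hXY.comp (measurable_id.sub measurable_const) (measurable_id.sub measurable_const)
    have hI1 : Integrable (fun ω => u k ω i - Evec μ (u k) i) μ :=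
      (centered_L2 (huL2 k) i).integrable one_le_two
    have hI2 : Integrable (fun ω => v 0 ω j - Evec μ (v 0) j) μ :=
      (centered_L2 (hvL2 0) j).integrable one_le_two
    have hmul := hXY'.integral_mul_eq_mul_integral hI1.aestronglyMeasurable hI2.aestronglyMeasurable
    have : ∫ ω, (u k ω i - Evec μ (u k) i) * (v 0 ω j - Evec μ (v 0) j) ∂μ
        = (∫ ω, (u k ω i - Evec μ (u k) i) ∂μ) * ∫ ω, (v 0 ω j - Evec μ (v 0) j) ∂μ := by
      simpa [Pi.mul_apply] using hmul
    simp only [Cov, Matrix.of_apply, Matrix.zero_apply]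
    rw [this, integral_centered (huL2 k) i, zero_mul]
  -- covariance of u k with v s vanishes for s ≤ k
  have hcovuv : ∀ s k, s ≤ k → Cov μ (u k) (v s) = 0 := by
    intro s
    induction s with
    | zero => intro k _; exact hcov0 k
    | succ s ih =>
      intro k hk
      rw [hvfun s, Cov_add_right (D s) (hvL2 s) (huL2 s) (huL2 k),
        ih k (by omega), hwhite k s (by omega)]
      simp
  -- main induction: Cov (v k) (v s) = Dprod D s k * Cov (v s) (v s)
  have hmain : ∀ s k, s ≤ k → Cov μ (v k) (v s) = Dprod D s k * Cov μ (v s) (v s) := by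
    intro s k hsk
    induction k, hsk using Nat.le_induction with
    | base => rw [Dprod_of_le le_rfl, one_mul]
    | succ k hk ih =>
      rw [hvfun k, Cov_add_left (D k) (hvL2 k) (huL2 k) (hvL2 s), ih,
        hcovuv s k hk, Dprod_succ hk, add_zero, Matrix.mul_assoc]
  intro k s hsk
  rw [hmain s k hsk, Dprod_split (D := D) hsk, Matrix.mul_assoc, ← Matrix.mul_assoc (Dprod D 0 s),
    Matrix.mul_nonsing_inv _ ((Matrix.isUnit_iff_isUnit_det _).mp (Dprod_isUnit hD s)), one_mul]
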